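/- For a nonnegative integer n and parameters a, b, c, d with a + b + 1 = c + d + n (the balanced case) and no denominator Pochhammer vanishing, the terminating balanced ₃F₂ sum satisfies the Pfaff–Saalschütz identity: Σ_{i=0}^{n} (-n)_i (a)_i (b)_i / (i! (c)_i (d)_i) = (c - a)_n (c - b)_n / ((c)_n (c - a - b)_n). -/

import Mathlib

noncomputable def poch (x : ℝ) (n : ℕ) : ℝ := ∏ i ∈ Finset.range n, (x + i)

lemma poch_zero (x : ℝ) : poch x 0 = 1 := by simp [poch]

lemma poch_succ (x : ℝ) (n : ℕ) : poch x (n+1) = poch x n * (x + n) :=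
  Finset.prod_range_succ _ _

lemma poch_succ' (x : ℝ) (n : ℕ) : poch x (n+1) = x * poch (x+1) n := by
  unfold poch
  rw [Finset.prod_range_succ', mul_comm]
  congr 1
  · simp
  · exact Finset.prod_congr rfl fun i _ => by push_cast; ring

set_option maxHeartbeats 4000000 in
lemma key_id (N k : ℕ) (a b c d : ℝ) (hk : k ≤ N) (hdval : d = a+b-c-N)
    (hC : poch c k ≠ 0) (hC1 : poch c (k+1) ≠ 0)
    (hD : poch d k ≠ 0) (hD1 : poch d (k+1) ≠ 0)
    (hcN : c + N ≠ 0) :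
    poch (-((N:ℝ)+1)) k * poch a k * poch b k /
        ((Nat.factorial k : ℝ) * poch c k * poch d k)
      - ((c-a+N)*(c-b+N)/((c+N)*(c-a-b+N))) *
        (poch (-(N:ℝ)) k * poch a k * poch b k /
          ((Nat.factorial k : ℝ) * poch c k * poch (d+1) k))
    = (-((((k:ℝ)+1))*(((k:ℝ)+1)+c-1))/(((N:ℝ)+1)*(c+N))) *
        (poch (-((N:ℝ)+1)) (k+1) * poch a (k+1) * poch b (k+1) /
          ((Nat.factorial (k+1) : ℝ) * poch c (k+1) * poch d (k+1)))
      - (-(((k:ℝ))*((k:ℝ)+c-1))/(((N:ℝ)+1)*(c+N))) *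
        (poch (-((N:ℝ)+1)) k * poch a k * poch b k /
          ((Nat.factorial k : ℝ) * poch c k * poch d k)) := by
  have hkf : ((Nat.factorial k : ℝ)) ≠ 0 := Nat.cast_ne_zero.2 (Nat.factorial_ne_zero k)
  have hck : c + k ≠ 0 := by
    rw [poch_succ] at hC1; exact right_ne_zero_of_mul hC1
  have hdk : d + k ≠ 0 := by
    rw [poch_succ] at hD1; exact right_ne_zero_of_mul hD1
  have hd0 : d ≠ 0 := by
    rw [poch_succ'] at hD1; exact left_ne_zero_of_mul hD1
  have hN1 : ((N:ℝ)+1) ≠ 0 := by positivity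
  have hkN : (-1 + -(N:ℝ)) + k ≠ 0 := by
    have : (k:ℝ) ≤ N := Nat.cast_le.2 hk
    intro h; linarith
  have hcab : c - a - b + N ≠ 0 := by
    intro h; apply hd0; rw [hdval]; linarith
  have hP : poch (-((N:ℝ)+1)) k = -((N:ℝ)+1) * poch (-(N:ℝ)) k / ((-1 + -(N:ℝ)) + k) := by
    rw [eq_div_iff hkN]
    have : poch (-((N:ℝ)+1)) k * (-1 + -(N:ℝ) + k) = poch (-((N:ℝ)+1)) k * ((-((N:ℝ)+1)) + k) := by
      ring
    rw [this, ← poch_succ, poch_succ']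
    congr 2
    ring
  have hE : poch (d+1) k = poch d k * (d + k) / d := by
    rw [eq_div_iff hd0, mul_comm, ← poch_succ, poch_succ']
  rw [poch_succ a, poch_succ b, poch_succ c, poch_succ d, Nat.factorial_succ,
    poch_succ' (-((N:ℝ)+1)) k, hE, hP]
  have hNshift : (-((N:ℝ)+1)) + 1 = -(N:ℝ) := by ring
  rw [hNshift]
  subst hdval
  push_cast
  generalize poch a k = A
  generalize poch b k = B
  generalize poch (-(N:ℝ)) k = M
  generalize hCv : poch c k = C at hC ⊢
  generalize hDv : poch (a+b-c-(N:ℝ)) k = D at hD hdk ⊢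
  field_simp
  ring

lemma aux (a b c : ℝ) (n : ℕ) : ∀ d : ℝ, a + b + 1 = c + d + n →
    (∀ i ≤ n, poch c i ≠ 0) → (∀ i ≤ n, poch d i ≠ 0) →
    poch (c - a - b) n ≠ 0 →
    ∑ i ∈ Finset.range (n + 1),
      poch (-(n : ℝ)) i * poch a i * poch b i /
        ((Nat.factorial i : ℝ) * poch c i * poch d i)
    = poch (c - a) n * poch (c - b) n / (poch c n * poch (c - a - b) n) := by
  induction n with
  | zero =>
    intro d _ _ _ _
    simp [poch_zero]
  | succ N IH =>
    intro d hbal hc hd hcab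
    have hdval : d = a + b - c - N := by push_cast at hbal; linarith
    have hcN : c + N ≠ 0 := by
      have h := hc (N+1) le_rfl; rw [poch_succ] at h; exact right_ne_zero_of_mul h
    have hN1 : ((N:ℝ)+1) ≠ 0 := by positivity
    have hcabN : poch (c-a-b) N ≠ 0 := by
      rw [poch_succ] at hcab; exact left_ne_zero_of_mul hcab
    have hcabN2 : c - a - b + (N:ℝ) ≠ 0 := by
      rw [poch_succ] at hcab; exact right_ne_zero_of_mul hcab
    have hc' : ∀ i ≤ N, poch c i ≠ 0 := fun i hi => hc i (by omega)
    have hd' : ∀ i ≤ N, poch (d+1) i ≠ 0 := by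
      intro i hi
      have h2 := hd (i+1) (by omega)
      rw [poch_succ'] at h2
      exact right_ne_zero_of_mul h2
    have hbal' : a + b + 1 = c + (d+1) + N := by push_cast at hbal ⊢; linarith
    have hIH := IH (d+1) hbal' hc' hd' hcabN
    set g : ℕ → ℝ := fun k => (-(((k:ℝ))*((k:ℝ)+c-1))/(((N:ℝ)+1)*(c+(N:ℝ)))) *
        (poch (-((N:ℝ)+1)) k * poch a k * poch b k /
          ((Nat.factorial k : ℝ) * poch c k * poch d k)) with hg
    have key : ∀ k ∈ Finset.range (N+1),
        poch (-((N:ℝ)+1)) k * poch a k * poch b k /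
          ((Nat.factorial k : ℝ) * poch c k * poch d k)
        = ((c-a+(N:ℝ))*(c-b+(N:ℝ))/((c+(N:ℝ))*(c-a-b+(N:ℝ)))) *
          (poch (-(N:ℝ)) k * poch a k * poch b k /
            ((Nat.factorial k : ℝ) * poch c k * poch (d+1) k)) + (g (k+1) - g k) := by
      intro k hk
      have hk' : k ≤ N := Nat.lt_succ_iff.1 (Finset.mem_range.1 hk)
      have h := key_id N k a b c d hk' hdval (hc k (by omega)) (hc (k+1) (by omega))
        (hd k (by omega)) (hd (k+1) (by omega)) hcN
      simp only [hg]
      push_cast at h ⊢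
      linarith [h]
    push_cast
    rw [Finset.sum_range_succ, Finset.sum_congr rfl key, Finset.sum_add_distrib,
      ← Finset.mul_sum, Finset.sum_range_sub g, hIH]
    have hg0 : g 0 = 0 := by simp [hg]
    have hco : (-((((N:ℝ)+1))*((((N:ℝ)+1))+c-1))/(((N:ℝ)+1)*(c+(N:ℝ)))) = -1 := by
      rw [div_eq_iff (mul_ne_zero hN1 hcN)]; ring
    have hgN1 : g (N+1) = - (poch (-((N:ℝ)+1)) (N+1) * poch a (N+1) * poch b (N+1) /
          ((Nat.factorial (N+1) : ℝ) * poch c (N+1) * poch d (N+1))) := by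
      simp only [hg]
      push_cast
      rw [hco]
      ring
    rw [hg0, hgN1]
    rw [poch_succ (c-a), poch_succ (c-b), poch_succ c, poch_succ (c-a-b)]
    have hCN : poch c N ≠ 0 := hc N (by omega)
    field_simp
    ring

/-- The Pfaff–Saalschütz identity for terminating balanced ₃F₂ series. -/
theorem stmt2 (n : ℕ) (a b c d : ℝ)
    (hbal : a + b + 1 = c + d + n)
    (hc : ∀ i ≤ n, poch c i ≠ 0) (hd : ∀ i ≤ n, poch d i ≠ 0)
    (hcab : poch (c - a - b) n ≠ 0) :
    ∑ i ∈ Finset.range (n + 1),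
      poch (-(n : ℝ)) i * poch a i * poch b i /
        ((Nat.factorial i : ℝ) * poch c i * poch d i)
    = poch (c - a) n * poch (c - b) n / (poch c n * poch (c - a - b) n) := by
  exact aux a b c n d hbal hc hd hcab
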